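/- arXiv:0905.2665 — 2 statements merged into one kernel-verified Lean document; each statement's English description precedes it below -/
import Mathlib

section
/- For any α ∈ A^A and a ∈ A, the partial function β ↦ φ^a(α,β) : A^A ⇀ A is partial sequential. -/
open Classical

noncomputable section

namespace OostenK2

universe u

/-! ### Finite partial functions -/

/-- Finite partial functions `A ⇀ A`, as finite functional graphs,
ordered by inclusion of graphs. -/
abbrev FPF (A : Type u) : Type u :=
  {p : Set (A × A) // (∀ ⦃a b b'⦄, (a, b) ∈ p → (a, b') ∈ p → b = b') ∧ p.Finite}

variable {A : Type u}

/-- The domain of a finite partial function. -/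
def FPF.dom (p : FPF A) : Set A := Prod.fst '' p.val

/-- The empty finite partial function (the root of sequential trees). -/
def FPF.empty (A : Type u) : FPF A :=
  ⟨∅, fun _ _ _ h => absurd h (Set.notMem_empty _), Set.finite_empty⟩

/-- A total function `α` extends the finite partial function `p`. -/
def agrees (α : A → A) (p : FPF A) : Prop := ∀ ⦃a b⦄, (a, b) ∈ p.val → α a = b

/-- A partial function `β` extends the finite partial function `p`. -/
def agreesP (β : A → Option A) (p : FPF A) : Prop :=
  ∀ ⦃a b⦄, (a, b) ∈ p.val → β a = some b

/-- Two finite partial functions are compatible if their union is a function. -/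
def compatFPF (s t : FPF A) : Prop :=
  ∀ ⦃a b b'⦄, (a, b) ∈ s.val → (a, b') ∈ t.val → b = b'

/-! ### Trees -/

section Trees

variable {X : Type*} [PartialOrder X]

/-- A leaf of `T`: an element of `T` with no strict extension in `T`. -/
def IsLeaf (T : Set X) (p : X) : Prop := p ∈ T ∧ ¬∃ q ∈ T, p < q

/-- `q` is an immediate successor of `p` in `T`. -/
def ImmSucc (T : Set X) (p q : X) : Prop :=
  q ∈ T ∧ p < q ∧ ¬∃ t ∈ T, p < t ∧ t < q

/-- `T` is a tree with root `root`: the root belongs to `T`, lies below every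
element, and the predecessors of any element form a chain. -/
def IsTreeOn (root : X) (T : Set X) : Prop :=
  root ∈ T ∧ (∀ p ∈ T, root ≤ p) ∧ ∀ p ∈ T, IsChain (· ≤ ·) {t | t ∈ T ∧ t ≤ p}

/-- A tree is well-founded iff it has no infinite strictly increasing path. -/
def WellFoundedTree (T : Set X) : Prop :=
  ¬∃ f : ℕ → X, (∀ n, f n ∈ T) ∧ StrictMono f

end Trees

/-- A sequential tree: a tree of finite partial functions, rooted at the empty
function, in which all immediate successors of a non-leaf `p` have domain
`dom p ∪ {a}` for a single `a ∉ dom p`. -/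
def IsSeqTree (T : Set (FPF A)) : Prop :=
  IsTreeOn (FPF.empty A) T ∧
  ∀ p ∈ T, ¬IsLeaf T p →
    ∃ a ∉ FPF.dom p, ∀ q, ImmSucc T p q → FPF.dom q = insert a (FPF.dom p)

/-- A total sequential tree: the immediate successors of a non-leaf `p` are
*all* extensions of `p` with domain `dom p ∪ {a}`. -/
def IsTotalSeqTree (T : Set (FPF A)) : Prop :=
  IsTreeOn (FPF.empty A) T ∧
  ∀ p ∈ T, ¬IsLeaf T p →
    ∃ a ∉ FPF.dom p,
      ∀ q : FPF A, ImmSucc T p q ↔ p < q ∧ FPF.dom q = insert a (FPF.dom p)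

/-- `Φ` (as a relation `(A → A) → A → Prop`) is a partial sequential function:
`Φ α = b` iff the path of `α` through some total sequential tree `T` ends in a
leaf `v` with `F v = b`. -/
def SeqRel (Φ : (A → A) → A → Prop) : Prop :=
  ∃ (T : Set (FPF A)) (F : FPF A → A), IsTotalSeqTree T ∧
    ∀ α b, Φ α b ↔ ∃ v, IsLeaf T v ∧ agrees α v ∧ F v = b

/-- A total bisequential tree: pairs of finite partial functions ordered by
pairwise inclusion; at every non-leaf, either the first or the second component
is interrogated at a single new argument, with all possible answers present. -/
def IsTotalBiTree (T : Set (FPF A × FPF A)) : Prop :=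
  IsTreeOn (FPF.empty A, FPF.empty A) T ∧
  ∀ p ∈ T, ¬IsLeaf T p →
    (∃ a ∉ FPF.dom p.1, ∀ q : FPF A × FPF A,
        ImmSucc T p q ↔ q.2 = p.2 ∧ p.1 ≤ q.1 ∧ FPF.dom q.1 = insert a (FPF.dom p.1)) ∨
    (∃ b ∉ FPF.dom p.2, ∀ q : FPF A × FPF A,
        ImmSucc T p q ↔ q.1 = p.1 ∧ p.2 ≤ q.2 ∧ FPF.dom q.2 = insert b (FPF.dom p.2))

/-- `G` is a total bisequential function. -/
def BiSeqTotal (G : (A → A) → (A → A) → A) : Prop :=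
  ∃ (T : Set (FPF A × FPF A)) (F : FPF A × FPF A → A), IsTotalBiTree T ∧
    ∀ α β, ∃ v, IsLeaf T v ∧ agrees α v.1 ∧ agrees β v.2 ∧ G α β = F v

/-! ### Interrogations (total functions)

Throughout, `mk : List A → A` is an injective coding of finite sequences,
`qp b` is the code `⟨q,b⟩` of a query and `rp c` the code `⟨r,c⟩` of a result. -/

/-- `L` is an interrogation of `β` by `α`. -/
def Interrog (mk : List A → A) (qp : A → A) (α β : A → A) (L : List A) : Prop :=
  ∀ j (hj : j < L.length), ∃ b, α (mk (L.take j)) = qp b ∧ β b = L[j]'hj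

/-- `φ_α(β) = c` via interrogations. -/
def phiRel (mk : List A → A) (qp rp : A → A) (α β : A → A) (c : A) : Prop :=
  ∃ L, Interrog mk qp α β L ∧ α (mk L) = rp c

/-- `L` is an `a`-interrogation of `β` by `α`. -/
def AInterrog (mk : List A → A) (qp : A → A) (a : A) (α β : A → A) (L : List A) : Prop :=
  ∀ j (hj : j < L.length), ∃ b, α (mk (a :: L.take j)) = qp b ∧ β b = L[j]'hj

/-- `φ^a(α,β) = c` via `a`-interrogations. -/
def phiA (mk : List A → A) (qp rp : A → A) (a : A) (α β : A → A) (c : A) : Prop :=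
  ∃ L, AInterrog mk qp a α β L ∧ α (mk (a :: L)) = rp c

/-- The application of `K₂(A)`: `αβ` is defined with value `γ` iff
`φ^a(α,β) = γ a` for every `a`. -/
def AppRel (mk : List A → A) (qp rp : A → A) (α β γ : A → A) : Prop :=
  ∀ a, phiA mk qp rp a α β (γ a)

/-! ### Partial combinatory algebras (abstractly) -/

/-- A set with a partial binary application. -/
structure PCAStruct (X : Type*) where
  app : X → X → Part X

/-- Extension of the application to `Part`; `Part`-equality is Kleene equality. -/
def pap {X : Type*} (S : PCAStruct X) (u v : Part X) : Part X :=
  u.bind fun a => v.bind fun b => S.app a b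

/-- `S` is a partial combinatory algebra: there are `k`, `s` with
`kxy = x` (everywhere defined), `sxy` defined, and `sxyz ≃ (xz)(yz)`. -/
def IsPCA {X : Type*} (S : PCAStruct X) : Prop :=
  ∃ k s : X,
    (∀ x y : X, pap S (S.app k x) (Part.some y) = Part.some x) ∧
    (∀ x y : X, (pap S (S.app s x) (Part.some y)).Dom) ∧
    (∀ x y z : X,
      pap S (pap S (S.app s x) (Part.some y)) (Part.some z)
        = pap S (S.app x z) (S.app y z))

/-- `t`, `f` are Booleans of `S`: distinct, with a definition-by-cases combinator. -/
def IsBooleans {X : Type*} (S : PCAStruct X) (t f : X) : Prop :=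
  t ≠ f ∧ ∃ C : X, ∀ a b : X,
    pap S (pap S (S.app C t) (Part.some a)) (Part.some b) = Part.some a ∧
    pap S (pap S (S.app C f) (Part.some a)) (Part.some b) = Part.some b

/-- Applicative morphism `γ : S → T`: a total relation such that some realizer
`r` tracks application. -/
def IsAppMor {X Y : Type*} (S : PCAStruct X) (T : PCAStruct Y) (γ : X → Set Y) : Prop :=
  (∀ x, (γ x).Nonempty) ∧
  ∃ r : Y, ∀ x x' z : X, z ∈ S.app x x' → ∀ b ∈ γ x, ∀ b' ∈ γ x',
    ∃ w, w ∈ pap T (T.app r b) (Part.some b') ∧ w ∈ γ z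

/-- The preorder on applicative morphisms. -/
def morLE {X Y : Type*} (T : PCAStruct Y) (γ γ' : X → Set Y) : Prop :=
  ∃ s : Y, ∀ x : X, ∀ b ∈ γ x, ∃ c, c ∈ T.app s b ∧ c ∈ γ' x

def morEquiv {X Y : Type*} (T : PCAStruct Y) (γ γ' : X → Set Y) : Prop :=
  morLE T γ γ' ∧ morLE T γ' γ

/-- Composition of applicative morphisms (as total relations). -/
def morComp {X Y Z : Type*} (γ : X → Set Y) (ε : Y → Set Z) : X → Set Z :=
  fun x => ⋃ y ∈ γ x, ε y

/-- Decidability of a morphism w.r.t. chosen Booleans. -/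
def IsDecidableMor {X Y : Type*} (T : PCAStruct Y) (γ : X → Set Y)
    (tX fX : X) (tY fY : Y) : Prop :=
  ∃ d : Y, (∀ b ∈ γ tX, T.app d b = Part.some tY) ∧
    (∀ b ∈ γ fX, T.app d b = Part.some fY)

/-- `rf` represents the partial function `f : X ⇀ X` w.r.t. `γ`. -/
def RepresentsPFun {X Y : Type*} (T : PCAStruct Y) (γ : X → Set Y)
    (f : X → Option X) (rf : Y) : Prop :=
  ∀ a x, f a = some x → ∀ b ∈ γ a, ∃ c, c ∈ T.app rf b ∧ c ∈ γ x

/-- The pca `K₂(A)` on `A^A` (application via `a`-interrogations). -/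
def K2 (mk : List A → A) (qp rp : A → A) : PCAStruct (A → A) where
  app α β := ⟨∀ a, ∃ c, phiA mk qp rp a α β c, fun h a => (h a).choose⟩

/-! ### Interrogations for partial functions -/

/-- Interrogation of a partial `β` by a partial `α`. -/
def PInterrog (mk : List A → A) (qp : A → A) (α β : A → Option A) (L : List A) : Prop :=
  ∀ j (hj : j < L.length), ∃ b, α (mk (L.take j)) = some (qp b) ∧ β b = some (L[j]'hj)

/-- `φ_α(β) = c` for partial functions. -/
def phiPRel (mk : List A → A) (qp rp : A → A) (α β : A → Option A) (c : A) : Prop :=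
  ∃ L, PInterrog mk qp α β L ∧ α (mk L) = some (rp c)

/-- `a`-interrogation of a partial `β` by a partial `α`. -/
def PAInterrog (mk : List A → A) (qp : A → A) (a : A) (α β : A → Option A)
    (L : List A) : Prop :=
  ∀ j (hj : j < L.length), ∃ b, α (mk (a :: L.take j)) = some (qp b) ∧ β b = some (L[j]'hj)

/-- `φ^a(α,β) = c` for partial functions. -/
def phiPA (mk : List A → A) (qp rp : A → A) (a : A) (α β : A → Option A) (c : A) : Prop :=
  ∃ L, PAInterrog mk qp a α β L ∧ α (mk (a :: L)) = some (rp c)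

/-- The (total!) application of `K₂^p(A)` on partial functions. -/
def K2pApp (mk : List A → A) (qp rp : A → A) (α β : A → Option A) : A → Option A :=
  fun a => if h : ∃ c, phiPA mk qp rp a α β c then some h.choose else none

/-- `K₂^p(A)` as a `PCAStruct` (with everywhere-defined application). -/
def K2p (mk : List A → A) (qp rp : A → A) : PCAStruct (A → Option A) :=
  ⟨fun α β => Part.some (K2pApp mk qp rp α β)⟩

/-! ### A pca with standard structure (Booleans, pairing, tuple coding, recursion) -/

/-- A pca together with the standard derived structure: Booleans with a case
combinator, pairing, an injective standard tuple coding with combinators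
manipulating it, and a fixed-point combinator. All of these exist in any
(nontrivial) pca. -/
structure StdPCA (A : Type u) where
  S : PCAStruct A
  isPCA : IsPCA S
  t : A
  f : A
  t_ne_f : t ≠ f
  Cc : A
  C_t : ∀ a b : A, pap S (pap S (S.app Cc t) (Part.some a)) (Part.some b) = Part.some a
  C_f : ∀ a b : A, pap S (pap S (S.app Cc f) (Part.some a)) (Part.some b) = Part.some b
  pairF : A → A → A
  Pc : A
  P0 : A
  P1 : A
  P_spec : ∀ x y : A, pap S (S.app Pc x) (Part.some y) = Part.some (pairF x y)
  P0_spec : ∀ x y : A, S.app P0 (pairF x y) = Part.some x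
  P1_spec : ∀ x y : A, S.app P1 (pairF x y) = Part.some y
  tup : List A → A
  tup_inj : Function.Injective tup
  CONS : A
  CONS_spec : ∀ (x : A) (L : List A),
    pap S (S.app CONS x) (Part.some (tup L)) = Part.some (tup (x :: L))
  SNOC : A
  SNOC_spec : ∀ (L : List A) (y : A),
    pap S (S.app SNOC (tup L)) (Part.some y) = Part.some (tup (L ++ [y]))
  Zc : A
  Z_spec : ∀ g : A, (S.app Zc g).Dom ∧ ∀ zg ∈ S.app Zc g, ∀ x : A,
    S.app zg x = pap S (S.app g zg) (Part.some x)

/-- The partial function `x ↦ a·x` represented by `a ∈ A`. -/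
def abar (P : StdPCA A) (a : A) : A → Option A :=
  fun x => if h : (P.S.app a x).Dom then some ((P.S.app a x).get h) else none

/-- An `x`-interrogation of the oracle `g : A ⇀ A` by `a ∈ A`, inside the pca. -/
def OInterrog (P : StdPCA A) (g : A → Option A) (a x : A) (L : List A) : Prop :=
  ∀ j (hj : j < L.length), ∃ v,
    P.S.app a (P.tup (x :: L.take j)) = Part.some (P.pairF P.f v) ∧ g v = some (L[j]'hj)

/-- The oracle application of `A[g]` : `a ·^g x = c`. -/
def oapp (P : StdPCA A) (g : A → Option A) (a x c : A) : Prop :=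
  ∃ L, OInterrog P g a x L ∧ P.S.app a (P.tup (x :: L)) = Part.some (P.pairF P.t c)

/-- `fn ≤_T g` : `fn` is representable in `A[g]`. -/
def leT (P : StdPCA A) (fn g : A → Option A) : Prop :=
  ∃ a : A, ∀ x y, fn x = some y → oapp P g a x y

/-- `j` is the join `f ⊔ g`. -/
def JoinSpec (P : StdPCA A) (f g j : A → Option A) : Prop :=
  (∀ x, j (P.pairF P.t x) = f x) ∧ (∀ x, j (P.pairF P.f x) = g x) ∧
  (∀ y, (∀ x, y ≠ P.pairF P.t x ∧ y ≠ P.pairF P.f x) → j y = none)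

/-- `K₂(A)` (built from the coding `mk`, `q`, `r`) is compatible with the pca
structure on `A`: elements of `A` translate between the codings and between
`q, r` and `⊥, ⊤`. -/
def CompatCoding (P : StdPCA A) (mk : List A → A) (q r : A) : Prop :=
  (∃ a : A, ∀ L, P.S.app a (mk L) = Part.some (P.tup L)) ∧
  (∃ b : A, ∀ L, P.S.app b (P.tup L) = Part.some (mk L)) ∧
  (∃ c : A, P.S.app c q = Part.some P.f ∧ P.S.app c r = Part.some P.t)

/-! ### Auxiliary development for Statement 4 -/

section Statement4Aux

variable {A : Type u}

lemma FPF.le_iff {p u : FPF A} : p ≤ u ↔ p.val ⊆ u.val := Iff.rfl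

lemma FPF.mem_dom {p : FPF A} {b : A} : b ∈ FPF.dom p ↔ ∃ v, (b, v) ∈ p.val := by
  constructor
  · rintro ⟨⟨x, v⟩, hx, rfl⟩; exact ⟨v, hx⟩
  · rintro ⟨v, hv⟩; exact ⟨(b, v), hv, rfl⟩

/-- Application of a finite partial function. -/
noncomputable def fapp (p : FPF A) (b : A) : Option A :=
  if h : ∃ v, (b, v) ∈ p.val then some h.choose else none

lemma fapp_eq_some {p : FPF A} {b v : A} (h : (b, v) ∈ p.val) : fapp p b = some v := by
  have hex : ∃ v, (b, v) ∈ p.val := ⟨v, h⟩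
  rw [fapp, dif_pos hex]
  exact congrArg some (p.2.1 hex.choose_spec h)

lemma fapp_mem {p : FPF A} {b v : A} (h : fapp p b = some v) : (b, v) ∈ p.val := by
  rw [fapp] at h
  split_ifs at h with hex
  obtain rfl := Option.some.inj h; exact hex.choose_spec

/-- Extend a finite partial function by the pair `(b, v)` (overriding at `b`). -/
def fext (p : FPF A) (b v : A) : FPF A :=
  ⟨insert (b, v) {x ∈ p.val | x.1 ≠ b}, by
    constructor
    · rintro x w w' hw hw'
      rcases Set.mem_insert_iff.1 hw with h | h
      · rcases Set.mem_insert_iff.1 hw' with h' | h'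
        · rw [Prod.mk.injEq] at h h'
          rw [h.2, h'.2]
        · rw [Prod.mk.injEq] at h
          exact absurd h.1 h'.2
      · rcases Set.mem_insert_iff.1 hw' with h' | h'
        · rw [Prod.mk.injEq] at h'
          exact absurd h'.1 h.2
        · exact p.2.1 h.1 h'.1
    · exact ((p.2.2.subset (Set.sep_subset _ _)).insert _)⟩

lemma fext_val {p : FPF A} {b : A} (hb : b ∉ FPF.dom p) (v : A) :
    (fext p b v).val = insert (b, v) p.val := by
  have : {x ∈ p.val | x.1 ≠ b} = p.val := by
    ext x
    refine ⟨fun hx => hx.1, fun hx => ⟨hx, fun hxb => hb ?_⟩⟩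
    exact FPF.mem_dom.2 ⟨x.2, by rw [← hxb, Prod.mk.eta]; exact hx⟩
  rw [fext]
  simp only [this]

lemma le_fext {p : FPF A} {b : A} (hb : b ∉ FPF.dom p) (v : A) : p ≤ fext p b v := by
  rw [FPF.le_iff, fext_val hb]
  exact Set.subset_insert _ _

lemma mem_fext {p : FPF A} {b : A} (hb : b ∉ FPF.dom p) (v : A) :
    (b, v) ∈ (fext p b v).val := by
  rw [fext_val hb]; exact Set.mem_insert _ _

lemma fext_ne {p : FPF A} {b : A} (hb : b ∉ FPF.dom p) (v : A) : fext p b v ≠ p := by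
  intro h
  exact hb (FPF.mem_dom.2 ⟨v, h ▸ mem_fext hb v⟩)

lemma dom_fext {p : FPF A} {b : A} (hb : b ∉ FPF.dom p) (v : A) :
    FPF.dom (fext p b v) = insert b (FPF.dom p) := by
  rw [FPF.dom, fext_val hb, Set.image_insert_eq, FPF.dom]

variable [Infinite A] (code : List A → A) (q r : A) (α : A → A) (a : A)

/-- Decode a query value. -/
noncomputable def decQ (x : A) : Option A :=
  if h : ∃ b, x = code [q, b] then some h.choose else none

variable {code q r} in
lemma code_pair_inj (hcode : Function.Injective code) {x y x' y' : A}
    (h : code [x, y] = code [x', y']) : x = x' ∧ y = y' := by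
  have := hcode h
  simp only [List.cons.injEq, and_true] at this
  exact ⟨this.1, this.2⟩

variable {code q r} in
lemma decQ_code (hcode : Function.Injective code) (b : A) :
    decQ code q (code [q, b]) = some b := by
  have hex : ∃ b', code [q, b] = code [q, b'] := ⟨b, rfl⟩
  rw [decQ, dif_pos hex]
  exact congrArg some ((code_pair_inj hcode hex.choose_spec).2.symm)

variable {code q r} in
lemma decQ_some {x b : A} (h : decQ code q x = some b) : x = code [q, b] := by
  rw [decQ] at h
  split_ifs at h with hex
  obtain rfl := Option.some.inj h; exact hex.choose_spec

variable {code q r} in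
lemma decQ_rp (hcode : Function.Injective code) (hqr : q ≠ r) (c : A) :
    decQ code q (code [r, c]) = none := by
  rw [decQ, dif_neg]
  rintro ⟨b, hb⟩
  exact hqr ((code_pair_inj hcode hb).1).symm

/-- The internal run of the interrogation over a finite partial oracle. -/
noncomputable def iter (p : FPF A) : ℕ → Option (List A)
  | 0 => some []
  | n + 1 => (iter p n).bind fun L =>
      (decQ code q (α (code (a :: L)))).bind fun b =>
        (fapp p b).map fun v => L ++ [v]

/-- The internal run reaches an answer. -/
def Ans (p : FPF A) : Prop :=
  ∃ c n L, iter code q α a p n = some L ∧ α (code (a :: L)) = code [r, c]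

/-- The internal run reaches a query outside the domain of `p`. -/
def NewQ (p : FPF A) : Prop :=
  ∃ b, b ∉ FPF.dom p ∧ ∃ n L, iter code q α a p n = some L ∧ α (code (a :: L)) = code [q, b]

/-- A fresh element outside the domain of `p`. -/
noncomputable def fresh (p : FPF A) : A :=
  ((p.2.2.image Prod.fst).infinite_compl).nonempty.choose

lemma fresh_not_mem (p : FPF A) : fresh p ∉ FPF.dom p :=
  ((p.2.2.image Prod.fst).infinite_compl).nonempty.choose_spec

/-- The next interrogation point of node `p`. -/
noncomputable def newb (p : FPF A) : A :=
  if h : NewQ code q α a p then h.choose else fresh p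

noncomputable def nextQ (p : FPF A) : Option A :=
  if Ans code q r α a p then none else some (newb code q α a p)

variable {code q r α a} in
lemma newb_not_mem (p : FPF A) : newb code q α a p ∉ FPF.dom p := by
  rw [newb]
  split_ifs with h
  · exact h.choose_spec.1
  · exact fresh_not_mem p

variable {code q r α a} in
lemma nextQ_some {p : FPF A} {b : A} (h : nextQ code q r α a p = some b) :
    b ∉ FPF.dom p := by
  rw [nextQ] at h
  split_ifs at h with hA
  obtain rfl := Option.some.inj h; exact newb_not_mem p

/-- Running down the tree along a list of answer values. -/
noncomputable def run : FPF A → List A → Option (FPF A)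
  | p, [] => some p
  | p, v :: V => (nextQ code q r α a p).bind fun b => run (fext p b v) V

variable {code q r α a}

lemma run_cons {p : FPF A} {v : A} {V : List A} :
    run code q r α a p (v :: V) =
      (nextQ code q r α a p).bind fun b => run code q r α a (fext p b v) V := rfl

lemma run_le : ∀ (V : List A) {p u : FPF A}, run code q r α a p V = some u → p ≤ u := by
  intro V
  induction V with
  | nil => intro p u h; obtain rfl := Option.some.inj h; exact le_refl _
  | cons v V ih =>
    intro p u h
    rw [run_cons, Option.bind_eq_some_iff] at h
    obtain ⟨b, hb, hrun⟩ := h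
    exact le_trans (le_fext (nextQ_some hb) v) (ih hrun)

lemma run_append (V W : List A) : ∀ (p : FPF A),
    run code q r α a p (V ++ W) = (run code q r α a p V).bind fun u => run code q r α a u W := by
  induction V with
  | nil => intro p; rfl
  | cons v V ih =>
    intro p
    rw [List.cons_append, run_cons, run_cons, Option.bind_assoc]
    exact congrArg _ (funext fun b => ih _)

lemma run_det : ∀ (V : List A) {p s u : FPF A} (W : List A),
    run code q r α a p V = some s → run code q r α a p W = some u → s ≤ u →
    V <+: W ∧ run code q r α a s (W.drop V.length) = some u := by
  intro V
  induction V with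
  | nil =>
    intro p s u W hV hW _
    obtain rfl := Option.some.inj hV
    exact ⟨List.nil_prefix, hW⟩
  | cons v V ih =>
    intro p s u W hV hW hsu
    rw [run_cons, Option.bind_eq_some_iff] at hV
    obtain ⟨b, hb, hrunV⟩ := hV
    have hbd : b ∉ FPF.dom p := nextQ_some hb
    cases W with
    | nil =>
      exfalso
      obtain rfl := Option.some.inj hW
      have h1 : fext p b v ≤ p := le_trans (run_le V hrunV) hsu
      have h2 : fext p b v = p := le_antisymm h1 (le_fext hbd v)
      exact hbd (FPF.mem_dom.2 ⟨v, h2 ▸ mem_fext hbd v⟩)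
    | cons w W' =>
      rw [run_cons, hb, Option.bind_some] at hW
      have hvw : v = w := by
        have h1 : (b, v) ∈ u.val := (le_trans (run_le V hrunV) hsu) (mem_fext hbd v)
        have h2 : (b, w) ∈ u.val := (run_le W' hW) (mem_fext hbd w)
        exact u.2.1 h1 h2
      subst hvw
      obtain ⟨hpre, hrest⟩ := ih W' hrunV hW hsu
      exact ⟨List.cons_prefix_cons.2 ⟨rfl, hpre⟩, by simpa using hrest⟩

variable (code q r α a) in
/-- The sequential tree: all nodes reachable from the empty node. -/
def Tree : Set (FPF A) := {p | ∃ V, run code q r α a (FPF.empty A) V = some p}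

variable (code q r α a) in
/-- The leaf labelling. -/
noncomputable def Fv (p : FPF A) : A :=
  if h : Ans code q r α a p then h.choose else Classical.arbitrary A

lemma Fv_spec {p : FPF A} (h : Ans code q r α a p) :
    ∃ n L, iter code q α a p n = some L ∧
      α (code (a :: L)) = code [r, Fv code q r α a p] := by
  rw [Fv, dif_pos h]
  exact h.choose_spec

lemma empty_mem : FPF.empty A ∈ Tree code q r α a := ⟨[], rfl⟩

lemma child_mem {p : FPF A} {b : A} (hp : p ∈ Tree code q r α a)
    (hb : nextQ code q r α a p = some b) (v : A) :
    fext p b v ∈ Tree code q r α a := by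
  obtain ⟨V, hV⟩ := hp
  refine ⟨V ++ [v], ?_⟩
  rw [run_append, hV, Option.bind_some, run_cons, hb, Option.bind_some]
  rfl

lemma tree_det {p u : FPF A} (hp : p ∈ Tree code q r α a) (hu : u ∈ Tree code q r α a)
    (hle : p ≤ u) : ∃ W, run code q r α a p W = some u := by
  obtain ⟨V, hV⟩ := hp
  obtain ⟨V', hV'⟩ := hu
  exact ⟨V'.drop V.length, (run_det V V' hV hV' hle).2⟩

lemma nextQ_none_iff {p : FPF A} :
    nextQ code q r α a p = none ↔ Ans code q r α a p := by
  rw [nextQ]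
  split_ifs with h <;> simp [h]

lemma isLeaf_iff {p : FPF A} (hp : p ∈ Tree code q r α a) :
    IsLeaf (Tree code q r α a) p ↔ Ans code q r α a p := by
  constructor
  · intro hL
    by_contra hA
    have hb : nextQ code q r α a p = some (newb code q α a p) := by
      rw [nextQ, if_neg hA]
    have hbd := nextQ_some hb
    refine hL.2 ⟨fext p (newb code q α a p) (Classical.arbitrary A),
      child_mem hp hb _, lt_of_le_of_ne (le_fext hbd _) (Ne.symm (fext_ne hbd _))⟩
  · intro hA
    refine ⟨hp, ?_⟩
    rintro ⟨u, hu, hlt⟩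
    obtain ⟨W, hW⟩ := tree_det hp hu hlt.le
    cases W with
    | nil => exact hlt.ne (Option.some.inj hW)
    | cons w W' =>
      rw [run_cons, nextQ_none_iff.2 hA, Option.bind_none] at hW
      cases hW

lemma isTree : IsTreeOn (FPF.empty A) (Tree code q r α a) := by
  refine ⟨empty_mem, fun p _ => fun x hx => absurd hx (Set.notMem_empty x), ?_⟩
  intro p hp s hs t ht hst
  obtain ⟨V, hV⟩ := hp
  obtain ⟨Vs, hVs⟩ := hs.1
  obtain ⟨Vt, hVt⟩ := ht.1
  have h1 : Vs <+: V := (run_det Vs V hVs hV hs.2).1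
  have h2 : Vt <+: V := (run_det Vt V hVt hV ht.2).1
  have hcomp : Vs <+: Vt ∨ Vt <+: Vs := by
    rcases le_total Vs.length Vt.length with h | h
    · left
      rw [List.prefix_iff_eq_take.1 h1, List.prefix_iff_eq_take.1 h2]
      exact List.take_prefix_take_left h
    · right
      rw [List.prefix_iff_eq_take.1 h1, List.prefix_iff_eq_take.1 h2]
      exact List.take_prefix_take_left h
  rcases hcomp with ⟨w, rfl⟩ | ⟨w, rfl⟩
  · left
    rw [run_append, hVs, Option.bind_some] at hVt
    exact run_le w hVt
  · right
    rw [run_append, hVt, Option.bind_some] at hVs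
    exact run_le w hVs

lemma val_eq_fext {p u : FPF A} {b : A} (hb : b ∉ FPF.dom p) (hlt : p < u)
    (hdom : FPF.dom u = insert b (FPF.dom p)) {v : A} (hv : (b, v) ∈ u.val) :
    u = fext p b v := by
  apply Subtype.ext
  rw [fext_val hb]
  apply Set.eq_of_subset_of_subset
  · rintro ⟨x, w⟩ hx
    have hxd : x ∈ FPF.dom u := FPF.mem_dom.2 ⟨w, hx⟩
    rw [hdom, Set.mem_insert_iff] at hxd
    rcases hxd with rfl | hxd
    · rw [u.2.1 hx hv]
      exact Set.mem_insert _ _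
    · obtain ⟨w', hw'⟩ := FPF.mem_dom.1 hxd
      have : (x, w') ∈ u.val := hlt.le hw'
      rw [u.2.1 hx this]
      exact Set.mem_insert_of_mem _ hw'
  · rintro ⟨x, w⟩ hx
    rcases Set.mem_insert_iff.1 hx with h | h
    · rw [h]; exact hv
    · exact hlt.le h

lemma immSucc_iff {p : FPF A} (hp : p ∈ Tree code q r α a) {b : A}
    (hb : nextQ code q r α a p = some b) (u : FPF A) :
    ImmSucc (Tree code q r α a) p u ↔ p < u ∧ FPF.dom u = insert b (FPF.dom p) := by
  have hbd : b ∉ FPF.dom p := nextQ_some hb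
  constructor
  · rintro ⟨hu, hlt, hno⟩
    obtain ⟨W, hW⟩ := tree_det hp hu hlt.le
    cases W with
    | nil => exact absurd (Option.some.inj hW) hlt.ne
    | cons w W' =>
      rw [run_cons, hb, Option.bind_some] at hW
      have ht : fext p b w ∈ Tree code q r α a := child_mem hp hb w
      have hle : fext p b w ≤ u := run_le W' hW
      have hplt : p < fext p b w := lt_of_le_of_ne (le_fext hbd w) (Ne.symm (fext_ne hbd w))
      have heq : fext p b w = u := by
        by_contra hne
        exact hno ⟨fext p b w, ht, hplt, lt_of_le_of_ne hle hne⟩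
      rw [← heq]
      exact ⟨hplt, dom_fext hbd w⟩
  · rintro ⟨hlt, hdom⟩
    have hbu : b ∈ FPF.dom u := by rw [hdom]; exact Set.mem_insert _ _
    obtain ⟨v, hv⟩ := FPF.mem_dom.1 hbu
    have hufe : u = fext p b v := val_eq_fext hbd hlt hdom hv
    refine ⟨hufe ▸ child_mem hp hb v, hlt, ?_⟩
    rintro ⟨t, ht, hplt, htu⟩
    obtain ⟨W, hW⟩ := tree_det hp ht hplt.le
    cases W with
    | nil => exact hplt.ne (Option.some.inj hW)
    | cons w W' =>
      rw [run_cons, hb, Option.bind_some] at hW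
      have h1 : fext p b w ≤ t := run_le W' hW
      have hw : (b, w) ∈ u.val := htu.le (h1 (mem_fext hbd w))
      have hwv : w = v := u.2.1 hw hv
      rw [hwv] at h1
      exact htu.ne (le_antisymm htu.le (hufe ▸ h1))

lemma totalSeqTree : IsTotalSeqTree (Tree code q r α a) := by
  refine ⟨isTree, ?_⟩
  intro p hp hnl
  have hA : ¬Ans code q r α a p := fun h => hnl ((isLeaf_iff hp).2 h)
  have hb : nextQ code q r α a p = some (newb code q α a p) := by
    rw [nextQ, if_neg hA]
  exact ⟨newb code q α a p, nextQ_some hb, fun u => immSucc_iff hp hb u⟩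

lemma iter_succ_eq (p : FPF A) (n : ℕ) :
    iter code q α a p (n + 1) = (iter code q α a p n).bind fun L =>
      (decQ code q (α (code (a :: L)))).bind fun b =>
        (fapp p b).map fun v => L ++ [v] := rfl

lemma iter_length {p : FPF A} : ∀ {n : ℕ} {L : List A},
    iter code q α a p n = some L → L.length = n := by
  intro n
  induction n with
  | zero => intro L h; obtain rfl := Option.some.inj h.symm; rfl
  | succ n ih =>
    intro L h
    rw [iter_succ_eq, Option.bind_eq_some_iff] at h
    obtain ⟨L', hL', h⟩ := h
    rw [Option.bind_eq_some_iff] at h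
    obtain ⟨b, hbq, h⟩ := h
    rw [Option.map_eq_some_iff] at h
    obtain ⟨v, hv, rfl⟩ := h
    rw [List.length_append, ih hL']
    rfl

lemma iter_steps {p : FPF A} : ∀ {n : ℕ} {L : List A},
    iter code q α a p n = some L → ∀ j (hj : j < L.length),
      ∃ b, α (code (a :: L.take j)) = code [q, b] ∧ fapp p b = some (L[j]'hj) := by
  intro n
  induction n with
  | zero =>
    intro L h j hj
    obtain rfl := Option.some.inj h.symm
    exact absurd hj (by simp)
  | succ n ih =>
    intro L h j hj
    rw [iter_succ_eq, Option.bind_eq_some_iff] at h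
    obtain ⟨L', hL', h⟩ := h
    rw [Option.bind_eq_some_iff] at h
    obtain ⟨b, hbq, h⟩ := h
    rw [Option.map_eq_some_iff] at h
    obtain ⟨v, hv, rfl⟩ := h
    have hlen : L'.length = n := iter_length hL'
    rcases Nat.lt_or_ge j n with hjn | hjn
    · have hjl : j < L'.length := hlen ▸ hjn
      obtain ⟨b', hb1, hb2⟩ := ih hL' j hjl
      refine ⟨b', ?_, ?_⟩
      · rwa [List.take_append_of_le_length hjl.le]
      · rwa [List.getElem_append_left hjl]
    · have hjn' : j = L'.length := by
        have : j < L'.length + 1 := by simpa using hj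
        omega
      subst hjn'
      refine ⟨b, ?_, ?_⟩
      · rw [List.take_left]
        exact decQ_some hbq
      · simpa using hv


section BetaRun

variable {β : A → A} {L : List A} {c : A}

lemma beta_iter (hcode : Function.Injective code) (hqr : q ≠ r)
    (hL : ∀ j (hj : j < L.length),
      ∃ b, α (code (a :: L.take j)) = code [q, b] ∧ β b = L[j]'hj)
    (hEnd : α (code (a :: L)) = code [r, c])
    {p : FPF A} (hagr : agrees β p) :
    ∀ {n : ℕ} {L' : List A},
      iter code q α a p n = some L' → L' = L.take n ∧ n ≤ L.length := by
  intro n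
  induction n with
  | zero =>
    intro L' h
    obtain rfl : ([] : List A) = L' := Option.some.inj h
    exact ⟨rfl, Nat.zero_le _⟩
  | succ n ih =>
    intro L' h
    rw [iter_succ_eq, Option.bind_eq_some_iff] at h
    obtain ⟨L'', hL'', h⟩ := h
    rw [Option.bind_eq_some_iff] at h
    obtain ⟨b, hbq, h⟩ := h
    rw [Option.map_eq_some_iff] at h
    obtain ⟨v, hv, rfl⟩ := h
    obtain ⟨rfl, hn⟩ := ih hL''
    have hnlt : n < L.length := by
      rcases lt_or_eq_of_le hn with h' | h'
      · exact h'
      · exfalso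
        rw [h', List.take_length, hEnd, decQ_rp hcode hqr] at hbq
        cases hbq
    obtain ⟨b', hb1, hb2⟩ := hL n hnlt
    rw [hb1, decQ_code hcode] at hbq
    obtain rfl := Option.some.inj hbq
    have hvL : v = L[n] := (hagr (fapp_mem hv)).symm.trans hb2
    subst hvL
    refine ⟨?_, hnlt⟩
    rw [List.take_succ, List.getElem?_eq_getElem hnlt]
    rfl

lemma beta_notNewQ (hcode : Function.Injective code)
    (hL : ∀ j (hj : j < L.length),
      ∃ b, α (code (a :: L.take j)) = code [q, b] ∧ β b = L[j]'hj)
    (hEnd : α (code (a :: L)) = code [r, c])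
    {p : FPF A} (hagr : agrees β p)
    (hnew : ¬ NewQ code q α a p) : Ans code q r α a p := by
  have key : ∀ n, n ≤ L.length → iter code q α a p n = some (L.take n) := by
    intro n
    induction n with
    | zero => intro _; rfl
    | succ n ih =>
      intro hn1
      have hn : n < L.length := Nat.lt_of_succ_le hn1
      obtain ⟨b, hb1, hb2⟩ := hL n hn
      have hbd : b ∈ FPF.dom p := by
        by_contra hbd
        exact hnew ⟨b, hbd, n, L.take n, ih hn.le, hb1⟩
      obtain ⟨v, hv⟩ := FPF.mem_dom.1 hbd
      have hvL : v = L[n] := (hagr hv).symm.trans hb2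
      rw [iter_succ_eq, ih hn.le, Option.bind_some, hb1, decQ_code hcode,
        Option.bind_some, fapp_eq_some hv, Option.map_some, hvL,
        List.take_succ, List.getElem?_eq_getElem hn]
      rfl
  refine ⟨c, L.length, L, ?_, hEnd⟩
  have := key L.length le_rfl
  rwa [List.take_length] at this

lemma beta_Ans_Fv (hcode : Function.Injective code) (hqr : q ≠ r)
    (hL : ∀ j (hj : j < L.length),
      ∃ b, α (code (a :: L.take j)) = code [q, b] ∧ β b = L[j]'hj)
    (hEnd : α (code (a :: L)) = code [r, c])
    {p : FPF A} (hagr : agrees β p)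
    (hA : Ans code q r α a p) : Fv code q r α a p = c := by
  obtain ⟨n, L', hit, hr'⟩ := Fv_spec hA
  obtain ⟨rfl, hn⟩ := beta_iter hcode hqr hL hEnd hagr hit
  rcases lt_or_eq_of_le hn with h' | h'
  · exfalso
    obtain ⟨b, hb1, -⟩ := hL n h'
    exact hqr (code_pair_inj hcode (hb1.symm.trans hr')).1
  · rw [h', List.take_length] at hr'
    exact (code_pair_inj hcode (hr'.symm.trans hEnd)).2

end BetaRun


end Statement4Aux

/-- For any `α ∈ A^A` and `a ∈ A`, the partial function
`β ↦ φ^a(α,β)` is partial sequential. -/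
theorem statement4 {A : Type u} [Infinite A] (code : List A → A)
    (hcode : Function.Injective code) (q r : A) (hqr : q ≠ r)
    (α : A → A) (a : A) :
    SeqRel (fun β c => phiA code (fun x => code [q, x]) (fun x => code [r, x]) a α β c) := by
  classical
  refine ⟨Tree code q r α a, Fv code q r α a, totalSeqTree, ?_⟩
  intro β c
  constructor
  · rintro ⟨L, hL, hEnd⟩
    have hL' : ∀ j (hj : j < L.length),
        ∃ b, α (code (a :: L.take j)) = code [q, b] ∧ β b = L[j]'hj := hL
    set Q : Set A := {x | ∃ j, j < L.length ∧ α (code (a :: L.take j)) = code [q, x]} with hQ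
    have hQfin : Q.Finite := by
      have hsub : Q ⊆ (fun j => if h : ∃ x, α (code (a :: L.take j)) = code [q, x]
          then h.choose else Classical.arbitrary A) '' Set.Iio L.length := by
        rintro x ⟨j, hj, hx⟩
        have hex : ∃ y, α (code (a :: L.take j)) = code [q, y] := ⟨x, hx⟩
        refine ⟨j, hj, ?_⟩
        show (if h : ∃ y, α (code (a :: L.take j)) = code [q, y]
          then h.choose else Classical.arbitrary A) = x
        rw [dif_pos hex]
        exact (code_pair_inj hcode (hex.choose_spec.symm.trans hx)).2
      exact ((Set.finite_Iio _).image _).subset hsub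
    have descend : ∀ k (p : FPF A), p ∈ Tree code q r α a → agrees β p →
        (Q \ FPF.dom p).ncard ≤ k →
        ∃ v, IsLeaf (Tree code q r α a) v ∧ agrees β v ∧ Fv code q r α a v = c := by
      intro k
      induction k using Nat.strong_induction_on with
      | _ k ih =>
        intro p hp hagr hcard
        by_cases hA : Ans code q r α a p
        · exact ⟨p, (isLeaf_iff hp).2 hA, hagr, beta_Ans_Fv hcode hqr hL' hEnd hagr hA⟩
        · have hNQ : NewQ code q α a p := by
            by_contra hN
            exact hA (beta_notNewQ hcode hL' hEnd hagr hN)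
          have hbs : nextQ code q r α a p = some (newb code q α a p) := by
            rw [nextQ, if_neg hA]
          set b := newb code q α a p with hbdef
          have hbd : b ∉ FPF.dom p := nextQ_some hbs
          have hbQ : b ∈ Q := by
            have hsp : b ∉ FPF.dom p ∧ ∃ n L', iter code q α a p n = some L' ∧
                α (code (a :: L')) = code [q, b] := by
              rw [hbdef, newb, dif_pos hNQ]
              exact hNQ.choose_spec
            obtain ⟨-, n, L', hit, hq'⟩ := hsp
            obtain ⟨rfl, hn⟩ := beta_iter hcode hqr hL' hEnd hagr hit
            have hnlt : n < L.length := by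
              rcases lt_or_eq_of_le hn with h' | h'
              · exact h'
              · exfalso
                rw [h', List.take_length] at hq'
                exact hqr (code_pair_inj hcode (hq'.symm.trans hEnd)).1
            exact ⟨n, hnlt, hq'⟩
          have hchild : fext p b (β b) ∈ Tree code q r α a := child_mem hp hbs (β b)
          have hagr' : agrees β (fext p b (β b)) := by
            intro x w hx
            rw [fext_val hbd] at hx
            rcases Set.mem_insert_iff.1 hx with h | h
            · rw [Prod.mk.injEq] at h
              rw [h.1, h.2]
            · exact hagr h
          have hsub2 : Q \ FPF.dom (fext p b (β b)) = (Q \ FPF.dom p) \ {b} := by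
            rw [dom_fext hbd]
            ext x
            simp only [Set.mem_diff, Set.mem_insert_iff, Set.mem_singleton_iff]
            tauto
          have hlt2 : ((Q \ FPF.dom p) \ {b}).ncard < (Q \ FPF.dom p).ncard :=
            Set.ncard_diff_singleton_lt_of_mem ⟨hbQ, hbd⟩ hQfin.diff
          refine ih ((Q \ FPF.dom (fext p b (β b))).ncard) ?_ _ hchild hagr' le_rfl
          rw [hsub2]
          exact lt_of_lt_of_le hlt2 hcard
    refine descend (Q \ FPF.dom (FPF.empty A)).ncard (FPF.empty A) empty_mem ?_ le_rfl
    intro x w hx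
    exact absurd hx (Set.notMem_empty _)
  · rintro ⟨v, hleaf, hagr, rfl⟩
    have hA : Ans code q r α a v := (isLeaf_iff hleaf.1).1 hleaf
    obtain ⟨n, L', hit, hr'⟩ := Fv_spec hA
    refine ⟨L', ?_, hr'⟩
    intro j hj
    obtain ⟨b, hb1, hb2⟩ := iter_steps hit j hj
    exact ⟨b, hb1, hagr (fapp_mem hb2)⟩

end OostenK2
end
end

section
/- There exists an element k ∈ A^A such that for all α, β ∈ A^A: kα is defined, (kα)β is defined, and (kα)β = α, where application is the interrogation-based application on A^A. -/
open Classical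

noncomputable section

namespace OostenK2

universe u

variable {A : Type u}

/-- Decoding: a left inverse of `code`. -/
def dec (code : List A → A) (x : A) : List A :=
  if h : ∃ L, code L = x then h.choose else []

lemma dec_code {code : List A → A} (hcode : Function.Injective code) (L : List A) :
    dec code (code L) = L := by
  have h : ∃ L', code L' = code L := ⟨L, rfl⟩
  have := h.choose_spec
  simp only [dec, dif_pos h]
  exact hcode this

/-- The combinator `k`. -/
def kfun (code : List A → A) (q r : A) : A → A := fun y =>
  match dec code y with
  | [x] => code [q, ((dec code x).headD q)]
  | [_, b] => code [r, code [r, b]]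
  | _ => y

/-- There is `k ∈ A^A` with `kα` and `(kα)β` always defined and
`(kα)β = α`, for the interrogation-based application on `A^A`. -/
theorem statement7 {A : Type u} [Infinite A] (code : List A → A)
    (hcode : Function.Injective code) (q r : A) (hqr : q ≠ r) :
    ∃ k : A → A, ∀ α : A → A, ∃ kα : A → A,
      AppRel code (fun x => code [q, x]) (fun x => code [r, x]) k α kα ∧
      ∀ β : A → A,
        AppRel code (fun x => code [q, x]) (fun x => code [r, x]) kα β α := by
  refine ⟨kfun code q r, fun α => ⟨fun x => code [r, α (((dec code x).headD q))], ?_, ?_⟩⟩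
  · intro a
    refine ⟨[α (((dec code a).headD q))], ?_, ?_⟩
    · intro j hj
      have hj0 : j = 0 := by simpa using Nat.lt_one_iff.mp (by simpa using hj)
      subst hj0
      refine ⟨((dec code a).headD q), ?_, rfl⟩
      show kfun code q r (code [a]) = code [q, ((dec code a).headD q)]
      simp [kfun, dec_code hcode]
    · show kfun code q r (code [a, α (((dec code a).headD q))]) = _
      simp [kfun, dec_code hcode]
  · intro β a
    refine ⟨[], ?_, ?_⟩
    · intro j hj; simp at hj
    · show code [r, α (((dec code (code [a])).headD q))] = code [r, α a]
      rw [dec_code hcode]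
      rfl

end OostenK2
end
end
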